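/- Let T > 0, let u : [0,T] × ℝ³ → ℝ³ be continuous, C¹ in space, 2π-periodic in each spatial coordinate, and divergence-free (Σⱼ ∂ⱼuⱼ = 0), and let w : [0,T] × ℝ³ → ℝ³ be C¹ in time, C² in space, 2π-periodic in each spatial coordinate, with ∂ₜw continuous, and satisfy ∂ₜw + (u·∇)w + ½∇|w|² − Δw = 0 on [0,T] × ℝ³. Then the momentum ∫_Q w(x,t) dx, where Q = [0,2π]³, is independent of t ∈ [0,T]. -/

import Mathlib

open Set Real MeasureTheory

/-- Spatial partial derivative `∂ᵢ f` of a scalar function on `ℝ³`. -/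
noncomputable def pd (i : Fin 3) (f : (Fin 3 → ℝ) → ℝ) (x : Fin 3 → ℝ) : ℝ :=
  fderiv ℝ f x (Pi.single i 1)

variable {f g : (Fin 3 → ℝ) → ℝ} {x : Fin 3 → ℝ} {j : Fin 3}

lemma pd_add (hf : DifferentiableAt ℝ f x) (hg : DifferentiableAt ℝ g x) :
    pd j (fun y => f y + g y) x = pd j f x + pd j g x := by
  simp [pd, fderiv_fun_add hf hg]

lemma pd_sub (hf : DifferentiableAt ℝ f x) (hg : DifferentiableAt ℝ g x) :
    pd j (fun y => f y - g y) x = pd j f x - pd j g x := by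
  simp [pd, fderiv_fun_sub hf hg]

lemma pd_mul (hf : DifferentiableAt ℝ f x) (hg : DifferentiableAt ℝ g x) :
    pd j (fun y => f y * g y) x = pd j f x * g x + f x * pd j g x := by
  simp [pd, fderiv_fun_mul hf hg]; ring

lemma pd_const_mul (hf : DifferentiableAt ℝ f x) (c : ℝ) :
    pd j (fun y => c * f y) x = c * pd j f x := by
  simp [pd, fderiv_const_mul hf c]

-- smoothness of i-th component of a pi-valued map
lemma contDiff_comp_proj {n : ℕ} {v : (Fin 3 → ℝ) → (Fin 3 → ℝ)} (hv : ContDiff ℝ n v)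
    (k : Fin 3) : ContDiff ℝ n (fun y => v y k) :=
  (ContinuousLinearMap.proj k : (Fin 3 → ℝ) →L[ℝ] ℝ).contDiff.comp hv

-- smoothness of pd of a C² function
lemma contDiff_pd {f : (Fin 3 → ℝ) → ℝ} (hf : ContDiff ℝ 2 f) (k : Fin 3) :
    ContDiff ℝ 1 (pd k f) := by
  have h1 : ContDiff ℝ 1 (fderiv ℝ f) := hf.fderiv_right (le_refl _)
  exact (ContinuousLinearMap.apply ℝ ℝ (Pi.single k 1)).contDiff.comp h1

lemma fderiv_periodic {f : (Fin 3 → ℝ) → ℝ} (hf : Differentiable ℝ f)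
    (c : Fin 3 → ℝ) (hper : ∀ x, f (x + c) = f x) (x : Fin 3 → ℝ) :
    fderiv ℝ f (x + c) = fderiv ℝ f x := by
  have h1 : HasFDerivAt (fun y => f (y + c)) (fderiv ℝ f (x + c)) x := by
    have := (hf (x + c)).hasFDerivAt.comp x ((hasFDerivAt_id x).add_const c)
    exact this
  have h2 : HasFDerivAt f (fderiv ℝ f (x + c)) x := by
    have : (fun y => f (y + c)) = f := funext hper
    rwa [this] at h1
  exact h2.fderiv.symm

lemma insertNth_shift (j : Fin 3) (y : Fin 2 → ℝ) (c : ℝ) :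
    (Fin.insertNth j c y : Fin 3 → ℝ) = Fin.insertNth j 0 y + Pi.single j c := by
  ext k
  rcases eq_or_ne j k with h | h
  · subst h; simp
  · rcases Fin.exists_succAbove_eq (Ne.symm h) with ⟨m, rfl⟩
    simp [Fin.insertNth_apply_succAbove, Pi.single_eq_of_ne (Fin.succAbove_ne j m)]

lemma integral_div_zero (F : Fin 3 → (Fin 3 → ℝ) → ℝ)
    (hd : ∀ j, Differentiable ℝ (F j))
    (hper : ∀ j x, F j (x + Pi.single j (2 * Real.pi)) = F j x)
    (hi : IntegrableOn (fun x => ∑ j, pd j (F j) x)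
      (Icc (0 : Fin 3 → ℝ) (fun _ => 2 * Real.pi))) :
    ∫ x in Icc (0 : Fin 3 → ℝ) (fun _ => 2 * Real.pi), ∑ j, pd j (F j) x = 0 := by
  have hle : (0 : Fin 3 → ℝ) ≤ fun _ => 2 * Real.pi := by
    intro i; positivity
  have key := MeasureTheory.integral_divergence_of_hasFDerivAt_off_countable'
    (0 : Fin 3 → ℝ) (fun _ => 2 * Real.pi) hle F (fun j x => fderiv ℝ (F j) x)
    ∅ Set.countable_empty (fun j => (hd j).continuous.continuousOn)
    (fun x _ j => (hd j x).hasFDerivAt) hi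
  have : ∫ x in Icc (0 : Fin 3 → ℝ) (fun _ => 2 * Real.pi), ∑ j, pd j (F j) x
      = ∫ x in Icc (0 : Fin 3 → ℝ) (fun _ => 2 * Real.pi),
          ∑ j : Fin 3, fderiv ℝ (F j) x (Pi.single j 1) := rfl
  rw [this, key]
  apply Finset.sum_eq_zero
  intro j _
  rw [sub_eq_zero]
  apply setIntegral_congr_fun (by measurability)
  intro y _
  have h := hper j (Fin.insertNth j 0 y)
  rw [← insertNth_shift] at h
  show F j (Fin.insertNth j ((fun _ => 2 * Real.pi) j) y) = F j (Fin.insertNth j ((0 : Fin 3 → ℝ) j) y)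
  simpa using h

lemma integral_dtw_zero (T : ℝ) (u w : ℝ → (Fin 3 → ℝ) → Fin 3 → ℝ) (t : ℝ) (i : Fin 3)
    (hu1 : ContDiff ℝ 1 (u t)) (hw2 : ContDiff ℝ 2 (w t))
    (hu_per : ∀ x, ∀ j : Fin 3, u t (x + Pi.single j (2 * Real.pi)) = u t x)
    (hw_per : ∀ x, ∀ j : Fin 3, w t (x + Pi.single j (2 * Real.pi)) = w t x)
    (hu_div : ∀ x, ∑ j : Fin 3, pd j (fun y => u t y j) x = 0)
    (heqt : ∀ x,
      derivWithin (fun s => w s x i) (Set.Icc 0 T) t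
        + ∑ j : Fin 3, u t x j * pd j (fun y => w t y i) x
        + (1 / 2) * pd i (fun y => ∑ j : Fin 3, (w t y j) ^ 2) x
        - ∑ j : Fin 3, pd j (fun y => pd j (fun z => w t z i) y) x = 0)
    (hcont : Continuous (fun x => derivWithin (fun s => w s x i) (Set.Icc 0 T) t)) :
    ∫ x in Icc (0 : Fin 3 → ℝ) (fun _ => 2 * Real.pi),
      derivWithin (fun s => w s x i) (Set.Icc 0 T) t = 0 := by
  classical
  -- the components
  set wi : (Fin 3 → ℝ) → ℝ := fun y => w t y i with hwi_def
  have hwi : ContDiff ℝ 2 wi := contDiff_comp_proj hw2 i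
  have hS : ContDiff ℝ 2 (fun y => ∑ j : Fin 3, (w t y j) ^ 2) := by
    apply ContDiff.sum
    intro k _
    exact (contDiff_comp_proj hw2 k).pow 2
  have huj : ∀ j : Fin 3, ContDiff ℝ 1 (fun y => u t y j) :=
    fun j => contDiff_comp_proj hu1 j
  -- the flux field
  set F : Fin 3 → (Fin 3 → ℝ) → ℝ := fun j y =>
    u t y j * wi y + ((if j = i then (1:ℝ) else 0) * ((1/2) * (∑ k : Fin 3, (w t y k) ^ 2)))
      - pd j wi y with hF_def
  have hdF : ∀ j, Differentiable ℝ (F j) := by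
    intro j
    apply Differentiable.sub
    · apply Differentiable.add
      · exact ((huj j).differentiable one_ne_zero).mul (hwi.differentiable two_ne_zero)
      · exact (differentiable_const _).mul
          ((differentiable_const _).mul (hS.differentiable two_ne_zero))
    · exact (contDiff_pd hwi j).differentiable one_ne_zero
  -- periodicity of F j in direction j
  have hperF : ∀ j x, F j (x + Pi.single j (2 * Real.pi)) = F j x := by
    intro j x
    have hwiper : ∀ y, wi (y + Pi.single j (2 * Real.pi)) = wi y := by
      intro y; simp only [hwi_def]; rw [hw_per y j]
    have hpdper : pd j wi (x + Pi.single j (2 * Real.pi)) = pd j wi x := by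
      simp only [pd]
      rw [fderiv_periodic (hwi.differentiable two_ne_zero) _ hwiper]
    simp only [hF_def]
    rw [hpdper, hu_per x j]
    congr 2
    · simp only [hwiper]
    · congr 1; congr 1
      exact Finset.sum_congr rfl fun k _ => by rw [hw_per x j]
  -- the divergence equals the negative time derivative
  have hdiv : ∀ x, (∑ j : Fin 3, pd j (F j) x)
      = -(derivWithin (fun s => w s x i) (Set.Icc 0 T) t) := by
    intro x
    have e1 : ∀ j : Fin 3, pd j (F j) x
        = (pd j (fun y => u t y j) x * wi x + u t x j * pd j wi x)
          + (if j = i then (1:ℝ) else 0) * ((1/2) * pd j (fun y => ∑ k : Fin 3, (w t y k) ^ 2) x)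
          - pd j (pd j wi) x := by
      intro j
      have d1 : DifferentiableAt ℝ (fun y => u t y j) x :=
        ((huj j).differentiable one_ne_zero) x
      have d2 : DifferentiableAt ℝ wi x := (hwi.differentiable two_ne_zero) x
      have d3 : DifferentiableAt ℝ (fun y => ∑ k : Fin 3, (w t y k) ^ 2) x :=
        (hS.differentiable two_ne_zero) x
      have d4 : DifferentiableAt ℝ (fun y => u t y j * wi y) x := d1.mul d2
      have d5 : DifferentiableAt ℝ
          (fun y => (if j = i then (1:ℝ) else 0) * ((1/2) * (∑ k : Fin 3, (w t y k) ^ 2))) x := by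
        exact (differentiableAt_const _).mul ((differentiableAt_const _).mul d3)
      have d6 : DifferentiableAt ℝ (fun y => u t y j * wi y
          + (if j = i then (1:ℝ) else 0) * ((1/2) * (∑ k : Fin 3, (w t y k) ^ 2))) x := d4.add d5
      have d7 : DifferentiableAt ℝ (pd j wi) x :=
        ((contDiff_pd hwi j).differentiable one_ne_zero) x
      rw [hF_def]
      rw [pd_sub d6 d7, pd_add d4 d5, pd_mul d1 d2, pd_const_mul (d3.const_mul _) _,
        pd_const_mul d3 _]
    have heq2 := heqt x
    calc ∑ j : Fin 3, pd j (F j) x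
        = (∑ j : Fin 3, pd j (fun y => u t y j) x * wi x)
          + (∑ j : Fin 3, u t x j * pd j wi x)
          + (∑ j : Fin 3, (if j = i then (1:ℝ) else 0)
              * ((1/2) * pd j (fun y => ∑ k : Fin 3, (w t y k) ^ 2) x))
          - ∑ j : Fin 3, pd j (pd j wi) x := by
          simp only [e1]; rw [Finset.sum_sub_distrib, Finset.sum_add_distrib,
            Finset.sum_add_distrib]
      _ = 0 * wi x + (∑ j : Fin 3, u t x j * pd j wi x)
          + (1/2) * pd i (fun y => ∑ k : Fin 3, (w t y k) ^ 2) x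
          - ∑ j : Fin 3, pd j (pd j wi) x := by
          rw [← Finset.sum_mul, hu_div x]
          congr 2
          rw [Finset.sum_eq_single i]
          · simp
          · intro b _ hb; simp [hb]
          · simp
      _ = -(derivWithin (fun s => w s x i) (Set.Icc 0 T) t) := by
          rw [zero_mul, zero_add]
          linarith [heq2]
  have hi : IntegrableOn (fun x => ∑ j : Fin 3, pd j (F j) x)
      (Icc (0 : Fin 3 → ℝ) (fun _ => 2 * Real.pi)) := by
    have : (fun x => ∑ j : Fin 3, pd j (F j) x)
        = fun x => -(derivWithin (fun s => w s x i) (Set.Icc 0 T) t) := funext hdiv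
    rw [this]
    exact (hcont.neg).continuousOn.integrableOn_compact isCompact_Icc
  have hz := integral_div_zero F hdF hperF hi
  have h2 : ∫ x in Icc (0 : Fin 3 → ℝ) (fun _ => 2 * Real.pi),
      -(derivWithin (fun s => w s x i) (Set.Icc 0 T) t) = 0 :=
    (setIntegral_congr_fun (by measurability) (fun x _ => (hdiv x).symm)).trans hz
  rw [integral_neg, neg_eq_zero] at h2
  exact h2


/-- Conservation of momentum: for a spatially periodic classical solution `w`
of `∂ₜw + (u·∇)w + ½∇|w|² − Δw = 0` with periodic divergence-free drift `u`,
the momentum `∫_Q w(x,t) dx` over the period cell `Q = [0,2π]³` is constant. -/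
theorem momentum_conservation
    (T : ℝ) (hT : 0 < T)
    (u w : ℝ → (Fin 3 → ℝ) → Fin 3 → ℝ)
    -- `u` is continuous on `[0,T] × ℝ³` and C¹ in space
    (hu_cont : ContinuousOn (fun p : ℝ × (Fin 3 → ℝ) => u p.1 p.2)
      (Set.Icc 0 T ×ˢ Set.univ))
    (hu_space : ∀ t ∈ Set.Icc (0 : ℝ) T, ContDiff ℝ 1 (u t))
    -- `u` is 2π-periodic in each spatial coordinate
    (hu_per : ∀ t ∈ Set.Icc (0 : ℝ) T, ∀ x, ∀ j : Fin 3,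
      u t (x + Pi.single j (2 * Real.pi)) = u t x)
    -- `u` is divergence free
    (hu_div : ∀ t ∈ Set.Icc (0 : ℝ) T, ∀ x,
      ∑ j : Fin 3, pd j (fun y => u t y j) x = 0)
    -- `w` is C¹ in time and C² in space
    (hw_time : ∀ x, ContDiffOn ℝ 1 (fun t => w t x) (Set.Icc 0 T))
    (hw_space : ∀ t ∈ Set.Icc (0 : ℝ) T, ContDiff ℝ 2 (w t))
    -- `w` is 2π-periodic in each spatial coordinate
    (hw_per : ∀ t ∈ Set.Icc (0 : ℝ) T, ∀ x, ∀ j : Fin 3,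
      w t (x + Pi.single j (2 * Real.pi)) = w t x)
    -- `∂ₜw` is continuous on `[0,T] × ℝ³`
    (hwt_cont : ∀ i : Fin 3, ContinuousOn
      (fun p : ℝ × (Fin 3 → ℝ) => derivWithin (fun s => w s p.2 i) (Set.Icc 0 T) p.1)
      (Set.Icc 0 T ×ˢ Set.univ))
    -- the equation `∂ₜw + (u·∇)w + ½∇|w|² − Δw = 0` on `[0,T] × ℝ³`
    (heq : ∀ t ∈ Set.Icc (0 : ℝ) T, ∀ x, ∀ i : Fin 3,
      derivWithin (fun s => w s x i) (Set.Icc 0 T) t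
        + ∑ j : Fin 3, u t x j * pd j (fun y => w t y i) x
        + (1 / 2) * pd i (fun y => ∑ j : Fin 3, (w t y j) ^ 2) x
        - ∑ j : Fin 3, pd j (fun y => pd j (fun z => w t z i) y) x = 0) :
    -- conclusion: `∫_Q w(x,t) dx` is independent of `t ∈ [0,T]`
    ∀ t₁ ∈ Set.Icc (0 : ℝ) T, ∀ t₂ ∈ Set.Icc (0 : ℝ) T, ∀ i : Fin 3,
      (∫ x in Set.univ.pi fun _ : Fin 3 => Set.Icc (0 : ℝ) (2 * Real.pi),
        w t₁ x i) =
      ∫ x in Set.univ.pi fun _ : Fin 3 => Set.Icc (0 : ℝ) (2 * Real.pi),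
        w t₂ x i := by
    classical
  set Q : Set (Fin 3 → ℝ) := Icc (0 : Fin 3 → ℝ) (fun _ => 2 * Real.pi) with hQ
  have hQpi : (Set.univ.pi fun _ : Fin 3 => Set.Icc (0 : ℝ) (2 * Real.pi)) = Q := by
    rw [hQ, ← Set.pi_univ_Icc]; rfl
  have hQc : IsCompact Q := isCompact_Icc
  -- continuity of x ↦ derivWithin … for fixed s
  have gcont : ∀ s ∈ Set.Icc (0:ℝ) T, ∀ i : Fin 3,
      Continuous (fun x => derivWithin (fun r => w r x i) (Set.Icc 0 T) s) := by
    intro s hs i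
    rw [← continuousOn_univ]
    have : ContinuousOn ((fun p : ℝ × (Fin 3 → ℝ) =>
        derivWithin (fun r => w r p.2 i) (Set.Icc 0 T) p.1) ∘ (fun x => (s, x))) Set.univ := by
      apply (hwt_cont i).comp (Continuous.continuousOn (continuous_const.prodMk continuous_id))
      intro x _
      exact ⟨hs, trivial⟩
    exact this
  -- key claim for ordered times
  have key : ∀ t₁ ∈ Set.Icc (0:ℝ) T, ∀ t₂ ∈ Set.Icc (0:ℝ) T, t₁ ≤ t₂ → ∀ i : Fin 3,
      (∫ x in Q, w t₁ x i) = ∫ x in Q, w t₂ x i := by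
    intro t₁ ht₁ t₂ ht₂ hle i
    set g : ℝ → (Fin 3 → ℝ) → ℝ :=
      fun s x => derivWithin (fun r => w r x i) (Set.Icc 0 T) s with hg
    -- FTC in time
    have ftc : ∀ x, w t₂ x i - w t₁ x i = ∫ s in Set.Ioc t₁ t₂, g s x := by
      intro x
      have hcd : ContDiffOn ℝ 1 (fun s => w s x i) (Set.Icc 0 T) :=
        (ContinuousLinearMap.proj i : (Fin 3 → ℝ) →L[ℝ] ℝ).contDiff.comp_contDiffOn (hw_time x)
      have hco : ContinuousOn (fun s => w s x i) (Set.Icc t₁ t₂) :=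
        (hcd.continuousOn).mono (Icc_subset_Icc ht₁.1 ht₂.2)
      have hdv : ∀ s ∈ Set.Ioo t₁ t₂, HasDerivWithinAt (fun r => w r x i) (g s x) (Set.Ioi s) s := by
        intro s hs
        have hsT : s ∈ Set.Ioo (0:ℝ) T := ⟨lt_of_le_of_lt ht₁.1 hs.1, lt_of_lt_of_le hs.2 ht₂.2⟩
        have hmem : Set.Icc (0:ℝ) T ∈ nhds s := Icc_mem_nhds hsT.1 hsT.2
        have h1 : HasDerivWithinAt (fun r => w r x i) (g s x) (Set.Icc 0 T) s :=
          ((hcd.differentiableOn one_ne_zero) s (Set.mem_Icc_of_Ioo hsT)).hasDerivWithinAt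
        exact (h1.hasDerivAt hmem).hasDerivWithinAt
      have hint : IntervalIntegrable (fun s => g s x) volume t₁ t₂ := by
        have hcg : ContinuousOn (fun s => g s x) (Set.Icc 0 T) := by
          have : ContinuousOn ((fun p : ℝ × (Fin 3 → ℝ) =>
              derivWithin (fun r => w r p.2 i) (Set.Icc 0 T) p.1) ∘ (fun s => (s, x)))
              (Set.Icc 0 T) := by
            apply (hwt_cont i).comp (Continuous.continuousOn (continuous_id.prodMk continuous_const))
            intro s hs
            exact ⟨hs, trivial⟩
          exact this
        exact (hcg.mono (Icc_subset_Icc ht₁.1 ht₂.2)).intervalIntegrable_of_Icc hle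
      have := intervalIntegral.integral_eq_sub_of_hasDeriv_right_of_le hle hco hdv hint
      rw [intervalIntegral.integral_of_le hle] at this
      rw [← this]
    -- integrability of w slices over Q
    have hwint : ∀ t ∈ Set.Icc (0:ℝ) T, IntegrableOn (fun x => w t x i) Q := by
      intro t ht
      exact (((ContinuousLinearMap.proj i : (Fin 3 → ℝ) →L[ℝ] ℝ).continuous.comp
        ((hw_space t ht).continuous)).continuousOn).integrableOn_compact hQc
    -- the product integrability for Fubini
    have hprod : Integrable (Function.uncurry (fun x s => g s x))
        ((volume.restrict Q).prod (volume.restrict (Set.Ioc t₁ t₂))) := by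
      rw [Measure.prod_restrict]
      apply MeasureTheory.IntegrableOn.mono_set (t := Q ×ˢ Set.Icc t₁ t₂)
      · apply ContinuousOn.integrableOn_compact (hQc.prod isCompact_Icc)
        have : ContinuousOn ((fun p : ℝ × (Fin 3 → ℝ) =>
            derivWithin (fun r => w r p.2 i) (Set.Icc 0 T) p.1) ∘ Prod.swap)
            (Q ×ˢ Set.Icc t₁ t₂) := by
          apply (hwt_cont i).comp continuous_swap.continuousOn
          intro p hp
          exact ⟨Set.mem_of_mem_of_subset hp.2 (Icc_subset_Icc ht₁.1 ht₂.2), trivial⟩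
        exact this
      · exact Set.prod_mono_right Set.Ioc_subset_Icc_self
    -- put it together
    have sub_int : ∫ x in Q, (w t₂ x i - w t₁ x i) = 0 := by
      have e1 : ∫ x in Q, (w t₂ x i - w t₁ x i) = ∫ x in Q, ∫ s in Set.Ioc t₁ t₂, g s x :=
        setIntegral_congr_fun hQc.measurableSet (fun x _ => ftc x)
      have e2 : ∫ x in Q, ∫ s in Set.Ioc t₁ t₂, g s x
          = ∫ s in Set.Ioc t₁ t₂, ∫ x in Q, g s x := integral_integral_swap hprod
      have e3 : ∫ s in Set.Ioc t₁ t₂, (∫ x in Q, g s x) = 0 := by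
        have h0 : Set.EqOn (fun s => ∫ x in Q, g s x) 0 (Set.Ioc t₁ t₂) := by
          intro s hs
          have hsT : s ∈ Set.Icc (0:ℝ) T :=
            ⟨le_of_lt (lt_of_le_of_lt ht₁.1 hs.1), le_trans hs.2 ht₂.2⟩
          exact integral_dtw_zero T u w s i (hu_space s hsT) (hw_space s hsT)
            (hu_per s hsT) (hw_per s hsT) (hu_div s hsT) (fun x => heq s hsT x i)
            (gcont s hsT i)
        rw [setIntegral_congr_fun measurableSet_Ioc h0]
        simp
      rw [e1, e2, e3]
    have := MeasureTheory.integral_sub (hwint t₂ ht₂) (hwint t₁ ht₁)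
    rw [sub_int] at this
    have := this.symm
    linarith [MeasureTheory.integral_sub (hwint t₂ ht₂) (hwint t₁ ht₁), sub_int]
  intro t₁ ht₁ t₂ ht₂ i
  rw [hQpi]
  rcases le_total t₁ t₂ with h | h
  · exact key t₁ ht₁ t₂ ht₂ h i
  · exact (key t₂ ht₂ t₁ ht₁ h i).symm
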